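/- Fix k ∈ (0,1), an integer m ≥ 1, let q = 1/(1−k) − √(1/(1−k)² − 1) ∈ (0,1), and let A_m be the (m+1)×(m+1) correlation defined from B_m. Then rank_psd(A_m) ≤ 3: explicitly, with the 2×2 matrices C_x, D_y giving a size-2 PSD factorization of B_m, the 3×3 positive semidefinite matrices C'_1 = D'_1 = ((1−q)/(2√(1+q²)))·diag(√2, q, q), C'_x = √((1+q²)/2)·(0 ⊕ C_{x−1}) and D'_y = √((1+q²)/2)·(0 ⊕ D_{y−1}) for 2 ≤ x,y ≤ m+1 satisfy tr(C'_x D'_y) = A_m(x,y) for all x, y ∈ {1,…,m+1}. -/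

import Mathlib

open Matrix BigOperators Finset
open scoped Kronecker ComplexOrder

noncomputable section

/-- The effect of the depolarizing channel on a measurement effect (Heisenberg picture). -/
def noisyEffect {d : ℕ} (lam : ℝ) (E : Matrix (Fin d) (Fin d) ℂ) : Matrix (Fin d) (Fin d) ℂ :=
  ((1 - lam : ℝ) : ℂ) • E + ((lam : ℂ) * E.trace / (d : ℂ)) • (1 : Matrix (Fin d) (Fin d) ℂ)

/-- A POVM on ℂ^d with n outcomes. -/
def IsPOVM {d n : ℕ} (E : Fin n → Matrix (Fin d) (Fin d) ℂ) : Prop :=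
  (∀ x, (E x).PosSemidef) ∧ ∑ x, E x = 1

/-- P is generated with local dimension d under depolarizing noise of strength lam. -/
def GeneratesWithNoise {n : ℕ} (P : Matrix (Fin n) (Fin n) ℝ) (lam : ℝ) (d : ℕ) : Prop :=
  ∃ (σ : Matrix (Fin d × Fin d) (Fin d × Fin d) ℂ)
    (E F : Fin n → Matrix (Fin d) (Fin d) ℂ),
    σ.PosSemidef ∧ σ.trace = 1 ∧ IsPOVM E ∧ IsPOVM F ∧
    ∀ x y, (P x y : ℂ) =
      ((noisyEffect lam (E x) ⊗ₖ noisyEffect lam (F y)) * σ).trace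

/-- The matrix P̂_λ^{s,t}. -/
def Phat {n : ℕ} (P : Matrix (Fin n) (Fin n) ℝ) (lam : ℝ) (s t : Fin n → ℝ)
    (x y : Fin n) : ℝ :=
  P x y - lam * s x * (∑ a, P a y) - lam * t y * (∑ b, P x b) + lam ^ 2 * s x * t y

/-- Nonnegative rank. -/
def NonnegRank {m n : ℕ} (P : Matrix (Fin m) (Fin n) ℝ) : ℕ :=
  sInf {r : ℕ | ∃ (u : Fin r → Fin m → ℝ) (v : Fin r → Fin n → ℝ),
    (∀ i x, 0 ≤ u i x) ∧ (∀ i y, 0 ≤ v i y) ∧ ∀ x y, P x y = ∑ i, u i x * v i y}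

/-- PSD rank. -/
def PsdRank {m n : ℕ} (M : Matrix (Fin m) (Fin n) ℝ) : ℕ :=
  sInf {r : ℕ | ∃ (C : Fin m → Matrix (Fin r) (Fin r) ℂ)
    (D : Fin n → Matrix (Fin r) (Fin r) ℂ),
    (∀ x, (C x).PosSemidef) ∧ (∀ y, (D y).PosSemidef) ∧
    ∀ x y, (M x y : ℂ) = (C x * D y).trace}

def outerProj {α : Type*} [Fintype α] (ψ : α → ℂ) : Matrix α α ℂ :=
  Matrix.of fun i j => ψ i * (starRingEnd ℂ) (ψ j)

def qval (k : ℝ) : ℝ := 1 / (1 - k) - Real.sqrt (1 / (1 - k) ^ 2 - 1)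

def Bmat (m : ℕ) (k : ℝ) : Matrix (Fin m) (Fin m) ℝ :=
  Matrix.of fun x y =>
    (1 / (m : ℝ) ^ 2) * (1 - k * Real.cos (2 * Real.pi * ((x.val : ℝ) + (y.val : ℝ)) / m))

def Amat (m : ℕ) (k : ℝ) : Matrix (Fin (m + 1)) (Fin (m + 1)) ℝ :=
  Matrix.of fun x y =>
    if x.val = 0 then
      (if y.val = 0 then (1 - qval k) ^ 2 / 2 else qval k * (1 - qval k) / (2 * m))
    else if y.val = 0 then qval k * (1 - qval k) / (2 * m)
    else ((1 + (qval k) ^ 2) / 2) *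
      ((1 / (m : ℝ) ^ 2) *
        (1 - k * Real.cos (2 * Real.pi * (((x.val : ℝ) - 1) + ((y.val : ℝ) - 1)) / m)))

def IsElPsdFactorization {n : ℕ} (P : Matrix (Fin n) (Fin n) ℝ) (lam : ℝ) (r : ℕ)
    (C D : Fin n → Matrix (Fin r) (Fin r) ℂ) : Prop :=
  (∀ x, (C x).PosSemidef) ∧ (∀ y, (D y).PosSemidef) ∧
  (∀ x y, (P x y : ℂ) = (C x * D y).trace) ∧
  IsUnit (∑ k, C k) ∧ IsUnit (∑ k, D k) ∧
  (∀ x, (C x - (((lam : ℂ) / r) * (C x * (∑ k, C k)⁻¹).trace) • (∑ k, C k)).PosSemidef) ∧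
  (∀ y, (D y - (((lam : ℂ) / r) * (D y * (∑ k, D k)⁻¹).trace) • (∑ k, D k)).PosSemidef)

/-- The 2×2 matrix C_x of the PSD factorization of B_m, with 0-based index `j : ℕ`. -/
def Cent (m : ℕ) (k : ℝ) (j : ℕ) : Matrix (Fin 2) (Fin 2) ℂ :=
  (((Real.sqrt 2 * m)⁻¹ : ℝ) : ℂ) •
    !![1, (Real.sqrt k : ℂ) * Complex.exp (2 * Real.pi * Complex.I * (j : ℂ) / m);
       (Real.sqrt k : ℂ) * Complex.exp (-(2 * Real.pi * Complex.I * (j : ℂ) / m)), 1]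

/-- The 2×2 matrix D_y of the PSD factorization of B_m, with 0-based index `j : ℕ`. -/
def Dent (m : ℕ) (k : ℝ) (j : ℕ) : Matrix (Fin 2) (Fin 2) ℂ :=
  (((Real.sqrt 2 * m)⁻¹ : ℝ) : ℂ) •
    !![1, -((Real.sqrt k : ℂ) * Complex.exp (-(2 * Real.pi * Complex.I * (j : ℂ) / m)));
       -((Real.sqrt k : ℂ) * Complex.exp (2 * Real.pi * Complex.I * (j : ℂ) / m)), 1]

/-- Embedding of a 2×2 matrix into a 3×3 matrix as the lower-right block (0 ⊕ M). -/
def embed3 (M : Matrix (Fin 2) (Fin 2) ℂ) : Matrix (Fin 3) (Fin 3) ℂ :=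
  !![0, 0, 0;
     0, M 0 0, M 0 1;
     0, M 1 0, M 1 1]

/-- The 3×3 matrices C'_x of the size-3 PSD factorization of A_m. -/
def Cmat' (m : ℕ) (k : ℝ) (x : Fin (m + 1)) : Matrix (Fin 3) (Fin 3) ℂ :=
  if x.val = 0 then
    (((1 - qval k) / (2 * Real.sqrt (1 + (qval k) ^ 2)) : ℝ) : ℂ) •
      Matrix.diagonal ![(Real.sqrt 2 : ℂ), ((qval k : ℝ) : ℂ), ((qval k : ℝ) : ℂ)]
  else
    ((Real.sqrt ((1 + (qval k) ^ 2) / 2) : ℝ) : ℂ) • embed3 (Cent m k (x.val - 1))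

/-- The 3×3 matrices D'_y of the size-3 PSD factorization of A_m. -/
def Dmat' (m : ℕ) (k : ℝ) (y : Fin (m + 1)) : Matrix (Fin 3) (Fin 3) ℂ :=
  if y.val = 0 then
    (((1 - qval k) / (2 * Real.sqrt (1 + (qval k) ^ 2)) : ℝ) : ℂ) •
      Matrix.diagonal ![(Real.sqrt 2 : ℂ), ((qval k : ℝ) : ℂ), ((qval k : ℝ) : ℂ)]
  else
    ((Real.sqrt ((1 + (qval k) ^ 2) / 2) : ℝ) : ℂ) • embed3 (Dent m k (y.val - 1))


-- helper lemmas to be inserted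
lemma psd_smul {n : ℕ} {M : Matrix (Fin n) (Fin n) ℂ} (hM : M.PosSemidef)
    {c : ℝ} (hc : 0 ≤ c) : ((c : ℂ) • M).PosSemidef := by
  rw [posSemidef_iff_dotProduct_mulVec]
  constructor
  · rw [Matrix.IsHermitian, conjTranspose_smul, hM.1.eq]
    congr 1
    simp [Complex.conj_ofReal]
  · intro x
    rw [smul_mulVec, dotProduct_smul, smul_eq_mul]
    exact mul_nonneg (by exact_mod_cast hc) (hM.dotProduct_mulVec_nonneg x)

lemma outerProj_eq {α : Type*} [Fintype α] (ψ : α → ℂ) :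
    outerProj ψ = (Matrix.of fun (i : α) (_ : Fin 1) => ψ i) *
      (Matrix.of fun (i : α) (_ : Fin 1) => ψ i)ᴴ := by
  ext i j
  simp [outerProj, Matrix.mul_apply]

lemma outerProj_posSemidef {α : Type*} [Fintype α] [DecidableEq α] (ψ : α → ℂ) :
    (outerProj ψ).PosSemidef := by
  rw [outerProj_eq]
  exact Matrix.posSemidef_self_mul_conjTranspose _

lemma embed3_eq (M : Matrix (Fin 2) (Fin 2) ℂ) :
    embed3 M = !![(0:ℂ),0;1,0;0,1] * M * !![(0:ℂ),0;1,0;0,1]ᴴ := by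
  ext i j
  fin_cases i <;> fin_cases j <;>
    simp [embed3, Matrix.mul_apply, Fin.sum_univ_two, Matrix.conjTranspose_apply, Matrix.vecMul, dotProduct, Matrix.vecHead, Matrix.vecTail]

lemma embed3_posSemidef {M : Matrix (Fin 2) (Fin 2) ℂ} (hM : M.PosSemidef) :
    (embed3 M).PosSemidef := by
  rw [embed3_eq]; exact hM.mul_mul_conjTranspose_same _

lemma qval_nonneg {k : ℝ} (hk0 : 0 < k) (hk1 : k < 1) : 0 ≤ qval k := by
  have h1 : (0:ℝ) < 1 - k := by linarith
  have ha : 1 ≤ 1 / (1 - k) := by rw [le_div_iff₀ h1]; linarith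
  have hp : 1 / (1 - k) ^ 2 = (1 / (1 - k)) ^ 2 := by rw [div_pow]; norm_num
  have : Real.sqrt (1 / (1 - k) ^ 2 - 1) ≤ 1 / (1 - k) := by
    rw [show (1:ℝ) / (1-k) = Real.sqrt ((1/(1-k))^2) from (Real.sqrt_sq (by linarith)).symm]
    exact Real.sqrt_le_sqrt (by rw [hp]; nlinarith)
  unfold qval; linarith

lemma qval_le_one {k : ℝ} (hk0 : 0 < k) (hk1 : k < 1) : qval k ≤ 1 := by
  have h1 : (0:ℝ) < 1 - k := by linarith
  have ha : 1 ≤ 1 / (1 - k) := by rw [le_div_iff₀ h1]; linarith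
  have hp : 1 / (1 - k) ^ 2 = (1 / (1 - k)) ^ 2 := by rw [div_pow]; norm_num
  have key : 1 / (1 - k) - 1 ≤ Real.sqrt (1 / (1 - k) ^ 2 - 1) := by
    rw [show (1:ℝ)/(1-k) - 1 = Real.sqrt ((1/(1-k) - 1)^2) from (Real.sqrt_sq (by linarith)).symm]
    exact Real.sqrt_le_sqrt (by rw [hp]; nlinarith)
  unfold qval; linarith

lemma conj_arg (a b : ℕ) : (starRingEnd ℂ) (2 * Real.pi * Complex.I * (a:ℂ) / (b:ℂ)) =
    -(2 * Real.pi * Complex.I * (a:ℂ) / (b:ℂ)) := by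
  simp only [map_div₀, _root_.map_mul, Complex.conj_I, Complex.conj_ofReal,
    Complex.conj_natCast, map_ofNat]
  ring

lemma Cent_eq (m : ℕ) (k : ℝ) (j : ℕ) :
    Cent m k j = (((Real.sqrt 2 * m)⁻¹ : ℝ) : ℂ) •
      ((((1 - Real.sqrt k : ℝ)) : ℂ) • (1 : Matrix (Fin 2) (Fin 2) ℂ) +
        (((Real.sqrt k : ℝ)) : ℂ) •
          outerProj ![1, Complex.exp (-(2 * Real.pi * Complex.I * (j:ℂ) / m))]) := by
  set z : ℂ := 2 * Real.pi * Complex.I * (j:ℂ) / m with hz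
  have h1 : (starRingEnd ℂ) (Complex.exp (-z)) = Complex.exp z := by
    rw [← Complex.exp_conj, map_neg, conj_arg, neg_neg]
  have h2 : Complex.exp (-z) * Complex.exp z = 1 := by
    rw [← Complex.exp_add]; simp
  ext i l
  fin_cases i <;> fin_cases l <;>
    simp [Cent, outerProj, Matrix.one_apply, h1, h2] <;> simp [hz]

lemma Dent_eq (m : ℕ) (k : ℝ) (j : ℕ) :
    Dent m k j = (((Real.sqrt 2 * m)⁻¹ : ℝ) : ℂ) •
      ((((1 - Real.sqrt k : ℝ)) : ℂ) • (1 : Matrix (Fin 2) (Fin 2) ℂ) +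
        (((Real.sqrt k : ℝ)) : ℂ) •
          outerProj ![1, -Complex.exp (2 * Real.pi * Complex.I * (j:ℂ) / m)]) := by
  set z : ℂ := 2 * Real.pi * Complex.I * (j:ℂ) / m with hz
  have h1 : (starRingEnd ℂ) (Complex.exp z) = Complex.exp (-z) := by
    rw [← Complex.exp_conj, conj_arg]
  have h2 : Complex.exp z * Complex.exp (-z) = 1 := by
    rw [← Complex.exp_add]; simp
  ext i l
  fin_cases i <;> fin_cases l <;>
    simp [Dent, outerProj, Matrix.one_apply, h1, h2] <;> simp [hz]

lemma Cent_posSemidef {m : ℕ} {k : ℝ} (hk0 : 0 < k) (hk1 : k < 1) (j : ℕ) :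
    (Cent m k j).PosSemidef := by
  rw [Cent_eq]
  refine psd_smul (Matrix.PosSemidef.add (psd_smul Matrix.PosSemidef.one ?_)
    (psd_smul (outerProj_posSemidef _) (Real.sqrt_nonneg k))) ?_
  · have := Real.sqrt_le_one.mpr (le_of_lt hk1); linarith
  · positivity

lemma Dent_posSemidef {m : ℕ} {k : ℝ} (hk0 : 0 < k) (hk1 : k < 1) (j : ℕ) :
    (Dent m k j).PosSemidef := by
  rw [Dent_eq]
  refine psd_smul (Matrix.PosSemidef.add (psd_smul Matrix.PosSemidef.one ?_)
    (psd_smul (outerProj_posSemidef _) (Real.sqrt_nonneg k))) ?_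
  · have := Real.sqrt_le_one.mpr (le_of_lt hk1); linarith
  · positivity

lemma trace_embed3_mul (A B : Matrix (Fin 2) (Fin 2) ℂ) :
    (embed3 A * embed3 B).trace = (A * B).trace := by
  simp [embed3, Matrix.trace_fin_three, Matrix.trace_fin_two, Matrix.mul_apply,
    Fin.sum_univ_three, Fin.sum_univ_two]

lemma Cent_mul_Dent_trace {m : ℕ} (hm : 1 ≤ m) {k : ℝ} (hk0 : 0 < k) (j j' : ℕ) :
    (Cent m k j * Dent m k j').trace =
      (((1 / (m : ℝ) ^ 2) * (1 - k * Real.cos (2 * Real.pi * ((j:ℝ) + (j':ℝ)) / m)) : ℝ) : ℂ) := by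
  have hm0 : (m:ℝ) ≠ 0 := by positivity
  set α : ℝ := 2 * Real.pi * ((j:ℝ) + (j':ℝ)) / m with hα
  have e1 : 2 * Real.pi * Complex.I * (j:ℂ) / m + 2 * Real.pi * Complex.I * (j':ℂ) / m
      = (α : ℂ) * Complex.I := by
    rw [hα]; push_cast; field_simp
  have key : Complex.exp (2 * Real.pi * Complex.I * (j:ℂ) / m) *
        Complex.exp (2 * Real.pi * Complex.I * (j':ℂ) / m) +
      Complex.exp (-(2 * Real.pi * Complex.I * (j:ℂ) / m)) *
        Complex.exp (-(2 * Real.pi * Complex.I * (j':ℂ) / m)) = 2 * (Real.cos α : ℂ) := by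
    rw [← Complex.exp_add, ← Complex.exp_add, ← neg_add, e1, Complex.exp_mul_I,
      ← neg_mul, Complex.exp_mul_I]
    push_cast [Complex.cos_neg, Complex.sin_neg, ← Complex.ofReal_cos]
    ring
  have hk2 : (Real.sqrt 2 : ℝ) * Real.sqrt 2 = 2 := Real.mul_self_sqrt (by norm_num)
  have hkk : (Real.sqrt k : ℝ) * Real.sqrt k = k := Real.mul_self_sqrt hk0.le
  simp only [Cent, Dent, Matrix.smul_mul, Matrix.mul_smul, Matrix.trace_smul, smul_eq_mul,
    Matrix.trace_fin_two, Matrix.mul_apply, Fin.sum_univ_two, Matrix.of_apply,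
    Matrix.cons_val', Matrix.cons_val_zero, Matrix.cons_val_one, Matrix.head_cons,
    Matrix.empty_val', Matrix.cons_val_fin_one, Matrix.head_fin_const]
  have h2c : (Real.sqrt 2 : ℂ) * (Real.sqrt 2 : ℂ) = 2 := by exact_mod_cast hk2
  have hkkc : (Real.sqrt k : ℂ) * (Real.sqrt k : ℂ) = (k : ℂ) := by exact_mod_cast hkk
  have hmc : (m : ℂ) ≠ 0 := by exact_mod_cast hm0
  have hs2 : (Real.sqrt 2 : ℂ) ≠ 0 := by
    simpa using (Complex.ofReal_ne_zero.mpr (ne_of_gt (Real.sqrt_pos.mpr two_pos)))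
  push_cast
  field_simp
  rw [Complex.ofReal_cos] at key
  linear_combination (-(Complex.exp (2 * ↑Real.pi * Complex.I * ↑j / ↑m) *
      Complex.exp (2 * ↑Real.pi * Complex.I * ↑j' / ↑m) +
      Complex.exp (-(2 * ↑Real.pi * Complex.I * ↑j / ↑m)) *
      Complex.exp (-(2 * ↑Real.pi * Complex.I * ↑j' / ↑m)))) * hkkc
    - (k:ℂ) * key + ((k:ℂ) * Complex.cos (α:ℂ) - 1) * h2c

lemma diag_embed3_trace (v : Fin 3 → ℂ) (M : Matrix (Fin 2) (Fin 2) ℂ) :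
    (Matrix.diagonal v * embed3 M).trace = v 1 * M 0 0 + v 2 * M 1 1 := by
  simp [embed3, Matrix.trace_fin_three, Matrix.mul_apply, Fin.sum_univ_three, Matrix.diagonal]

lemma embed3_diag_trace (v : Fin 3 → ℂ) (M : Matrix (Fin 2) (Fin 2) ℂ) :
    (embed3 M * Matrix.diagonal v).trace = M 0 0 * v 1 + M 1 1 * v 2 := by
  simp [embed3, Matrix.trace_fin_three, Matrix.mul_apply, Fin.sum_univ_three,
    Matrix.vecMul, dotProduct, Matrix.diagonal_apply]


/-- the explicit 3×3 PSD matrices C'_x, D'_y give a size-3 PSD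
factorization of A_m, so rank_psd(A_m) ≤ 3. -/
theorem Amat_psdRank_le_three
    (k : ℝ) (hk0 : 0 < k) (hk1 : k < 1) (m : ℕ) (hm : 1 ≤ m) :
    (∀ x, (Cmat' m k x).PosSemidef) ∧ (∀ y, (Dmat' m k y).PosSemidef) ∧
    (∀ x y, ((Amat m k x y : ℝ) : ℂ) = (Cmat' m k x * Dmat' m k y).trace) ∧
    PsdRank (Amat m k) ≤ 3 := by
  have hq0 := qval_nonneg hk0 hk1
  have hq1 := qval_le_one hk0 hk1
  set q := qval k with hqdef
  have htpos : (0:ℝ) < Real.sqrt (1 + q ^ 2) := Real.sqrt_pos.mpr (by positivity)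
  have ht : Real.sqrt (1 + q ^ 2) * Real.sqrt (1 + q ^ 2) = 1 + q ^ 2 :=
    Real.mul_self_sqrt (by positivity)
  have h2 : Real.sqrt 2 * Real.sqrt 2 = 2 := Real.mul_self_sqrt (by norm_num)
  have h2pos : (0:ℝ) < Real.sqrt 2 := Real.sqrt_pos.mpr (by norm_num)
  have hm0 : (m:ℝ) ≠ 0 := by positivity
  have hcnn : 0 ≤ (1 - q) / (2 * Real.sqrt (1 + q ^ 2)) :=
    div_nonneg (by linarith) (by positivity)
  have hst : Real.sqrt ((1 + q ^ 2) / 2) * Real.sqrt 2 = Real.sqrt (1 + q ^ 2) := by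
    rw [← Real.sqrt_mul (by positivity), div_mul_cancel₀]
    norm_num
  have hss : Real.sqrt ((1 + q ^ 2) / 2) * Real.sqrt ((1 + q ^ 2) / 2) = (1 + q ^ 2) / 2 :=
    Real.mul_self_sqrt (by positivity)
  have hCpsd : ∀ x, (Cmat' m k x).PosSemidef := by
    intro x
    by_cases hx : x.val = 0
    · rw [Cmat', if_pos hx]
      refine psd_smul (Matrix.posSemidef_diagonal_iff.mpr fun i => ?_) hcnn
      fin_cases i <;> simp <;>
        first
          | exact Real.sqrt_nonneg 2
          | exact hq0
    · rw [Cmat', if_neg hx]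
      exact psd_smul (embed3_posSemidef (Cent_posSemidef hk0 hk1 _)) (Real.sqrt_nonneg _)
  have hDpsd : ∀ y, (Dmat' m k y).PosSemidef := by
    intro y
    by_cases hy : y.val = 0
    · rw [Dmat', if_pos hy]
      refine psd_smul (Matrix.posSemidef_diagonal_iff.mpr fun i => ?_) hcnn
      fin_cases i <;> simp <;>
        first
          | exact Real.sqrt_nonneg 2
          | exact hq0
    · rw [Dmat', if_neg hy]
      exact psd_smul (embed3_posSemidef (Dent_posSemidef hk0 hk1 _)) (Real.sqrt_nonneg _)
  have htr : ∀ x y, ((Amat m k x y : ℝ) : ℂ) = (Cmat' m k x * Dmat' m k y).trace := by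
    intro x y
    by_cases hx : x.val = 0 <;> by_cases hy : y.val = 0
    · rw [Cmat', if_pos hx, Dmat', if_pos hy]
      rw [Amat]
      simp only [Matrix.of_apply, hx, hy, if_pos]
      rw [Matrix.smul_mul, Matrix.mul_smul, Matrix.trace_smul, Matrix.trace_smul,
        Matrix.diagonal_mul_diagonal, Matrix.trace_diagonal, Fin.sum_univ_three]
      simp only [Matrix.cons_val_zero, Matrix.cons_val_one, Matrix.head_cons,
        Matrix.cons_val_two, Matrix.tail_cons, smul_eq_mul]
      norm_cast
      rw [← hqdef]
      field_simp
      linear_combination (2*q^2-4*q+2)*ht + (2*q-q^2-1)*h2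
    · rw [Cmat', if_pos hx, Dmat', if_neg hy]
      rw [Amat]
      simp only [Matrix.of_apply, hx, hy, if_pos, if_neg, if_true, if_false, ite_true, ite_false]
      rw [Matrix.smul_mul, Matrix.mul_smul, Matrix.trace_smul, Matrix.trace_smul]
      rw [diag_embed3_trace]
      simp only [Dent, Matrix.smul_apply, Matrix.cons_val_one, Matrix.cons_val_zero,
        Matrix.head_cons, Matrix.cons_val_two, Matrix.tail_cons, Matrix.of_apply,
        Matrix.cons_val', Matrix.empty_val', Matrix.cons_val_fin_one, smul_eq_mul, mul_one]
      norm_cast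
      rw [← hqdef]
      field_simp
      have h2c : ((Real.sqrt 2 : ℝ) : ℂ) * ((Real.sqrt 2 : ℝ) : ℂ) = 2 := by exact_mod_cast h2
      push_cast
      linear_combination (-2 * q * (1 - q) * (m:ℝ) * Real.sqrt 2) * hst +
        (2 * q * (1 - q) * (m:ℝ) * Real.sqrt ((1 + q ^ 2) / 2)) * h2
    · rw [Cmat', if_neg hx, Dmat', if_pos hy]
      rw [Amat]
      simp only [Matrix.of_apply, hx, hy, if_pos, if_neg, if_true, if_false, ite_true, ite_false]
      rw [Matrix.smul_mul, Matrix.mul_smul, Matrix.trace_smul, Matrix.trace_smul]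
      rw [embed3_diag_trace]
      simp only [Cent, Matrix.smul_apply, Matrix.cons_val_one, Matrix.cons_val_zero,
        Matrix.head_cons, Matrix.cons_val_two, Matrix.tail_cons, Matrix.of_apply,
        Matrix.cons_val', Matrix.empty_val', Matrix.cons_val_fin_one, smul_eq_mul, mul_one]
      norm_cast
      rw [← hqdef]
      field_simp
      have h2c : ((Real.sqrt 2 : ℝ) : ℂ) * ((Real.sqrt 2 : ℝ) : ℂ) = 2 := by exact_mod_cast h2
      push_cast
      linear_combination (-2 * q * (1 - q) * (m:ℝ) * Real.sqrt 2) * hst +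
        (2 * q * (1 - q) * (m:ℝ) * Real.sqrt ((1 + q ^ 2) / 2)) * h2
    · rw [Cmat', if_neg hx, Dmat', if_neg hy]
      rw [Amat]
      simp only [Matrix.of_apply, hx, hy, if_pos, if_neg, if_true, if_false, ite_true, ite_false]
      rw [Matrix.smul_mul, Matrix.mul_smul, Matrix.trace_smul, Matrix.trace_smul,
        trace_embed3_mul, Cent_mul_Dent_trace hm hk0]
      have hx1 : (((x.val - 1 : ℕ) : ℝ)) = (x.val : ℝ) - 1 := by
        rw [Nat.cast_sub (Nat.one_le_iff_ne_zero.mpr hx)]; norm_num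
      have hy1 : (((y.val - 1 : ℕ) : ℝ)) = (y.val : ℝ) - 1 := by
        rw [Nat.cast_sub (Nat.one_le_iff_ne_zero.mpr hy)]; norm_num
      rw [hx1, hy1]
      norm_cast
      rw [← hqdef]
      rw [smul_smul, hss, Complex.real_smul, ← Complex.ofReal_mul]
  exact ⟨hCpsd, hDpsd, htr, Nat.sInf_le ⟨Cmat' m k, Dmat' m k, hCpsd, hDpsd, htr⟩⟩

end
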